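/- Let n ≥ 1, let w₀ = 1 and w₁, …, wₙ be positive integers, define a : ℕ → ℕ^{n+1} by a(0) = (0,…,0) and a(k+1) = a(k) + e_{i(k)}, where i(k) is the smallest index i minimizing a(k)_i / w_i, set μ = w₀ + w₁ + ⋯ + wₙ, c_k = min_{0 ≤ i ≤ n} a(k)_i / w_i ∈ ℚ, and α_k = k − μ·c_k for 0 ≤ k ≤ μ−1. Then the multiset {α_k : 0 ≤ k ≤ μ−1} of rational numbers is symmetric about n/2, i.e. it equals the multiset {n − α_k : 0 ≤ k ≤ μ−1}. -/

import Mathlib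

namespace Test


/-- Generic rank lemma for a strict linear order on a finset. -/
theorem rank_facts {α : Type*} [DecidableEq α] (s : Finset α) (lt : α → α → Prop)
    [DecidableRel lt]
    (hirr : ∀ x, ¬ lt x x)
    (htr : ∀ x y z, lt x y → lt y z → lt x z)
    (htot : ∀ x ∈ s, ∀ y ∈ s, x ≠ y → lt x y ∨ lt y x) :
    (∀ x ∈ s, ∀ y ∈ s,
      ((s.filter (fun z => lt z x)).card < (s.filter (fun z => lt z y)).card ↔ lt x y))
    ∧ (∀ k, k < s.card → ∃ x ∈ s, (s.filter (fun z => lt z x)).card = k)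
    ∧ (∀ x ∈ s, (s.filter (fun z => lt z x)).card < s.card) := by
  have mono : ∀ x ∈ s, ∀ y ∈ s, lt x y →
      (s.filter (fun z => lt z x)).card < (s.filter (fun z => lt z y)).card := by
    intro x hx y hy hxy
    apply Finset.card_lt_card
    constructor
    · intro z hz
      simp only [Finset.mem_filter] at *
      exact ⟨hz.1, htr _ _ _ hz.2 hxy⟩
    · intro hsub
      have hxmem : x ∈ s.filter (fun z => lt z y) := Finset.mem_filter.2 ⟨hx, hxy⟩
      have := hsub hxmem
      simp only [Finset.mem_filter] at this
      exact hirr x this.2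
  have iff1 : ∀ x ∈ s, ∀ y ∈ s,
      ((s.filter (fun z => lt z x)).card < (s.filter (fun z => lt z y)).card ↔ lt x y) := by
    intro x hx y hy
    constructor
    · intro h
      rcases eq_or_ne x y with rfl | hne
      · omega
      rcases htot x hx y hy hne with h1 | h1
      · exact h1
      · exact absurd (mono y hy x hx h1) (by omega)
    · exact mono x hx y hy
  have hlt : ∀ x ∈ s, (s.filter (fun z => lt z x)).card < s.card := by
    intro x hx
    have hsub : s.filter (fun z => lt z x) ⊆ s.erase x := by
      intro z hz
      simp only [Finset.mem_filter] at hz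
      refine Finset.mem_erase.2 ⟨?_, hz.1⟩
      rintro rfl; exact hirr _ hz.2
    calc (s.filter (fun z => lt z x)).card ≤ (s.erase x).card := Finset.card_le_card hsub
      _ < s.card := Finset.card_erase_lt_of_mem hx
  refine ⟨iff1, ?_, hlt⟩
  have hinj : Set.InjOn (fun x => (s.filter (fun z => lt z x)).card) s := by
    intro x hx y hy hxy
    by_contra hne
    rcases htot x hx y hy hne with h | h
    · have := mono x hx y hy h; simp only at hxy; omega
    · have := mono y hy x hx h; simp only at hxy; omega
  intro k hk
  have himg : s.image (fun x => (s.filter (fun z => lt z x)).card) = Finset.range s.card := by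
    apply Finset.eq_of_subset_of_card_le
    · intro m hm
      simp only [Finset.mem_image] at hm
      obtain ⟨x, hx, rfl⟩ := hm
      exact Finset.mem_range.2 (hlt x hx)
    · rw [Finset.card_range, Finset.card_image_of_injOn hinj]
  have : k ∈ s.image (fun x => (s.filter (fun z => lt z x)).card) := by
    rw [himg]; exact Finset.mem_range.2 hk
  simpa using this



variable {n : ℕ} (w : Fin (n + 1) → ℕ)

def D : Finset (Fin (n + 1) × ℕ) :=
  Finset.univ.biUnion (fun j => (Finset.range (w j)).image (fun m => (j, m)))

def rr (p : Fin (n + 1) × ℕ) : ℚ := (p.2 : ℚ) / (w p.1 : ℚ)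

def plt (p q : Fin (n + 1) × ℕ) : Prop :=
  rr w p < rr w q ∨ (rr w p = rr w q ∧ p.1 < q.1)

instance : DecidableRel (plt w) := fun p q => by unfold plt; exact inferInstance

def pos (p : Fin (n + 1) × ℕ) : ℕ := ((D w).filter (fun q => plt w q p)).card

def S (r : ℚ) : Finset (Fin (n + 1)) :=
  Finset.univ.filter (fun j => ∃ m ∈ Finset.range (w j), (m : ℚ) / (w j : ℚ) = r)

def srk (r : ℚ) (j : Fin (n + 1)) : ℕ := ((S w r).filter (fun x => x < j)).card

lemma mem_D {p : Fin (n + 1) × ℕ} : p ∈ D w ↔ p.2 < w p.1 := by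
  simp only [D, Finset.mem_biUnion, Finset.mem_image, Finset.mem_univ, true_and,
    Finset.mem_range]
  constructor
  · rintro ⟨j, m, hm, rfl⟩; exact hm
  · intro h; exact ⟨p.1, p.2, h, rfl⟩

lemma card_D : (D w).card = ∑ j, w j := by
  rw [D, Finset.card_biUnion]
  · refine Finset.sum_congr rfl fun j _ => ?_
    rw [Finset.card_image_of_injective _ (fun m m' h => (Prod.mk.injEq j m j m').mp h |>.2),
      Finset.card_range]
  · intro x _ y _ hxy
    simp only [Finset.disjoint_left, Finset.mem_image]
    rintro p ⟨m, _, rfl⟩ ⟨m', _, h⟩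
    exact hxy (congrArg Prod.fst h).symm


variable (hw : ∀ j, 0 < w j)
include hw

lemma wpos (j : Fin (n + 1)) : (0 : ℚ) < (w j : ℚ) := by exact_mod_cast hw j

omit hw in
lemma rr_nonneg (p : Fin (n + 1) × ℕ) : 0 ≤ rr w p :=
  div_nonneg (by positivity) (by positivity)

lemma rr_lt_one {p : Fin (n + 1) × ℕ} (hp : p ∈ D w) : rr w p < 1 := by
  rw [rr, div_lt_one (wpos w hw p.1)]
  exact_mod_cast (mem_D w).1 hp

lemma rr_eq_zero_iff (p : Fin (n + 1) × ℕ) : rr w p = 0 ↔ p.2 = 0 := by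
  rw [rr, div_eq_zero_iff]
  constructor
  · rintro (h | h)
    · exact_mod_cast h
    · exact absurd h (ne_of_gt (wpos w hw p.1))
  · intro h; left; exact_mod_cast h

lemma rr_snd_inj {j : Fin (n + 1)} {m m' : ℕ}
    (h : rr w (j, m) = rr w (j, m')) : m = m' := by
  have := wpos w hw j
  rw [rr, rr, div_eq_div_iff (ne_of_gt this) (ne_of_gt this)] at h
  exact_mod_cast mul_right_cancel₀ (ne_of_gt this) h

omit hw in
lemma plt_irrefl (p : Fin (n + 1) × ℕ) : ¬ plt w p p := by
  simp [plt]

omit hw in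
lemma plt_trans (p q r : Fin (n + 1) × ℕ) (h1 : plt w p q) (h2 : plt w q r) :
    plt w p r := by
  rcases h1 with h1 | ⟨h1, h1'⟩ <;> rcases h2 with h2 | ⟨h2, h2'⟩
  · exact Or.inl (h1.trans h2)
  · exact Or.inl (h2 ▸ h1)
  · exact Or.inl (h1 ▸ h2)
  · exact Or.inr ⟨h1.trans h2, h1'.trans h2'⟩

lemma plt_total (p q : Fin (n + 1) × ℕ) (hne : p ≠ q) : plt w p q ∨ plt w q p := by
  rcases lt_trichotomy (rr w p) (rr w q) with h | h | h
  · exact Or.inl (Or.inl h)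
  · rcases lt_trichotomy p.1 q.1 with h' | h' | h'
    · exact Or.inl (Or.inr ⟨h, h'⟩)
    · exfalso
      apply hne
      have : p.2 = q.2 := by
        apply rr_snd_inj w hw
        rw [show ((p.1, p.2) : Fin (n+1) × ℕ) = p from rfl]
        rw [h, h']
      exact Prod.ext h' this
    · exact Or.inr (Or.inr ⟨h.symm, h'⟩)
  · exact Or.inr (Or.inl h)

lemma pos_lt_iff {p q : Fin (n + 1) × ℕ} (hp : p ∈ D w) (hq : q ∈ D w) :
    pos w p < pos w q ↔ plt w p q :=
  (rank_facts (D w) (plt w) (plt_irrefl w) (plt_trans w)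
    (fun x _ y _ h => plt_total w hw x y h)).1 p hp q hq

lemma pos_surj {k : ℕ} (hk : k < (D w).card) : ∃ p ∈ D w, pos w p = k :=
  (rank_facts (D w) (plt w) (plt_irrefl w) (plt_trans w)
    (fun x _ y _ h => plt_total w hw x y h)).2.1 k hk

lemma pos_lt_card {p : Fin (n + 1) × ℕ} (hp : p ∈ D w) : pos w p < (D w).card :=
  (rank_facts (D w) (plt w) (plt_irrefl w) (plt_trans w)
    (fun x _ y _ h => plt_total w hw x y h)).2.2 p hp

lemma pos_inj {p q : Fin (n + 1) × ℕ} (hp : p ∈ D w) (hq : q ∈ D w)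
    (h : pos w p = pos w q) : p = q := by
  by_contra hne
  rcases plt_total w hw p q hne with h' | h'
  · have := (pos_lt_iff w hw hp hq).2 h'; omega
  · have := (pos_lt_iff w hw hq hp).2 h'; omega

lemma card_class (r : ℚ) (P : Fin (n + 1) → Prop) [DecidablePred P] :
    ((D w).filter (fun x => rr w x = r ∧ P x.1)).card = ((S w r).filter P).card := by
  apply Finset.card_bij (fun x _ => x.1)
  · intro x hx
    simp only [Finset.mem_filter] at hx ⊢
    refine ⟨?_, hx.2.2⟩
    simp only [S, Finset.mem_filter, Finset.mem_univ, true_and, Finset.mem_range]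
    exact ⟨x.2, (mem_D w).1 hx.1, hx.2.1⟩
  · intro x hx y hy hxy
    simp only [Finset.mem_filter] at hx hy
    have : x.2 = y.2 := by
      apply rr_snd_inj w hw (j := x.1)
      have e1 : ((x.1, x.2) : Fin (n+1) × ℕ) = x := rfl
      rw [e1, hx.2.1, hxy]
      have e2 : ((y.1, y.2) : Fin (n+1) × ℕ) = y := rfl
      rw [e2, hy.2.1]
    exact Prod.ext hxy this
  · intro j hj
    simp only [Finset.mem_filter, S, Finset.mem_univ, true_and, Finset.mem_range] at hj
    obtain ⟨⟨m, hm, hmr⟩, hP⟩ := hj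
    refine ⟨(j, m), ?_, rfl⟩
    simp only [Finset.mem_filter]
    exact ⟨(mem_D w).2 hm, hmr, hP⟩

lemma S_zero : S w 0 = Finset.univ := by
  ext j
  simp only [S, Finset.mem_filter, Finset.mem_univ, true_and, Finset.mem_range, iff_true]
  exact ⟨0, hw j, by simp⟩

lemma S_dual {r : ℚ} (h0 : 0 < r) (h1 : r < 1) : S w (1 - r) = S w r := by
  have key : ∀ r' : ℚ, 0 < r' → r' < 1 → S w r' ⊆ S w (1 - r') := by
    intro r' h0' h1' j hj
    simp only [S, Finset.mem_filter, Finset.mem_univ, true_and, Finset.mem_range] at hj ⊢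
    obtain ⟨m, hm, hmr⟩ := hj
    have hwj := wpos w hw j
    have hm0 : 0 < m := by
      rcases Nat.eq_zero_or_pos m with rfl | h
      · simp at hmr; exact absurd hmr.symm (ne_of_gt h0')
      · exact h
    refine ⟨w j - m, by omega, ?_⟩
    rw [Nat.cast_sub (le_of_lt hm), ← hmr]
    field_simp
  apply Finset.Subset.antisymm
  · have := key (1 - r) (by linarith) (by linarith)
    simpa using this
  · exact key r h0 h1

omit hw in
lemma srk_lt {r : ℚ} {j : Fin (n + 1)} (hj : j ∈ S w r) : srk w r j < (S w r).card := by
  apply lt_of_le_of_lt (Finset.card_le_card (fun x hx => Finset.mem_erase.2 ?_))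
    (Finset.card_erase_lt_of_mem hj)
  simp only [Finset.mem_filter] at hx
  exact ⟨ne_of_lt hx.2, hx.1⟩

omit hw in
lemma srk_le_n {r : ℚ} (j : Fin (n + 1)) : srk w r j ≤ n := by
  have : (S w r).filter (fun x => x < j) ⊆ Finset.univ.erase j := by
    intro x hx
    simp only [Finset.mem_filter] at hx
    exact Finset.mem_erase.2 ⟨ne_of_lt hx.2, Finset.mem_univ x⟩
  have := Finset.card_le_card this
  rw [Finset.card_erase_of_mem (Finset.mem_univ j)] at this
  simpa [srk] using this

omit hw in
lemma srk_surj {r : ℚ} {k : ℕ} (hk : k < (S w r).card) :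
    ∃ j ∈ S w r, srk w r j = k :=
  (rank_facts (S w r) (· < ·) (fun x => lt_irrefl x) (fun _ _ _ => lt_trans)
    (fun x _ y _ h => lt_or_gt_of_ne h)).2.1 k hk

lemma card_class' (r : ℚ) :
    ((D w).filter (fun x => rr w x = r)).card = (S w r).card := by
  have h := card_class w hw r (fun _ => True)
  simpa using h

lemma rr_flip {x : Fin (n + 1) × ℕ} (hx : x.2 ≤ w x.1) :
    rr w (x.1, w x.1 - x.2) = 1 - rr w x := by
  have hwj := wpos w hw x.1
  simp only [rr]
  rw [Nat.cast_sub hx]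
  field_simp

lemma pos_split {p : Fin (n + 1) × ℕ} :
    pos w p = ((D w).filter (fun x => rr w x < rr w p)).card + srk w (rr w p) p.1 := by
  have hsplit : (D w).filter (fun q => plt w q p)
      = (D w).filter (fun x => rr w x < rr w p)
        ∪ (D w).filter (fun x => rr w x = rr w p ∧ x.1 < p.1) := by
    rw [← Finset.filter_or]
    exact Finset.filter_congr (fun x _ => Iff.rfl)
  have hdisj : Disjoint ((D w).filter (fun x => rr w x < rr w p))
      ((D w).filter (fun x => rr w x = rr w p ∧ x.1 < p.1)) := by
    rw [Finset.disjoint_left]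
    intro x hx hx'
    simp only [Finset.mem_filter] at hx hx'
    exact absurd hx'.2.1 (ne_of_lt hx.2)
  rw [pos, hsplit, Finset.card_union_of_disjoint hdisj, srk]
  congr 1
  exact card_class w hw (rr w p) (fun x => x < p.1)

lemma tri_card (r : ℚ) :
    ((D w).filter (fun x => rr w x < r)).card + (S w r).card
      + ((D w).filter (fun x => r < rr w x)).card = (D w).card := by
  have hunion : (D w) = (D w).filter (fun x => rr w x < r)
      ∪ ((D w).filter (fun x => rr w x = r) ∪ (D w).filter (fun x => r < rr w x)) := by
    rw [← Finset.filter_or, ← Finset.filter_or]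
    refine (Finset.filter_true_of_mem (fun x _ => ?_)).symm
    rcases lt_trichotomy (rr w x) r with h | h | h
    exacts [Or.inl h, Or.inr (Or.inl h), Or.inr (Or.inr h)]
  have d1 : Disjoint ((D w).filter (fun x => rr w x = r))
      ((D w).filter (fun x => r < rr w x)) := by
    rw [Finset.disjoint_left]
    intro x hx hx'
    simp only [Finset.mem_filter] at hx hx'
    exact lt_irrefl r (hx.2 ▸ hx'.2)
  have d2 : Disjoint ((D w).filter (fun x => rr w x < r))
      ((D w).filter (fun x => rr w x = r) ∪ (D w).filter (fun x => r < rr w x)) := by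
    rw [Finset.disjoint_left]
    intro x hx hx'
    simp only [Finset.mem_filter, Finset.mem_union] at hx hx'
    rcases hx' with ⟨_, h'⟩ | ⟨_, h'⟩
    · exact absurd h' (ne_of_lt hx.2)
    · linarith [hx.2]
  have hcd : (D w).card = ((D w).filter (fun x => rr w x < r)).card
      + (((D w).filter (fun x => rr w x = r)).card
        + ((D w).filter (fun x => r < rr w x)).card) := by
    conv_lhs => rw [hunion]
    rw [Finset.card_union_of_disjoint d2, Finset.card_union_of_disjoint d1]
  rw [card_class' w hw] at hcd
  omega

lemma flip_card {r : ℚ} (h0 : 0 < r) (h1 : r < 1) :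
    ((D w).filter (fun x => 0 < rr w x ∧ rr w x < 1 - r)).card
      = ((D w).filter (fun x => r < rr w x)).card := by
  apply Finset.card_bij' (fun x _ => (x.1, w x.1 - x.2)) (fun x _ => (x.1, w x.1 - x.2))
  · intro x hx
    simp only [Finset.mem_filter] at hx ⊢
    obtain ⟨hxD, hx0, hx1⟩ := hx
    have hle : x.2 ≤ w x.1 := le_of_lt ((mem_D w).1 hxD)
    have hx2 : 0 < x.2 := by
      rcases Nat.eq_zero_or_pos x.2 with h | h
      · exact absurd ((rr_eq_zero_iff w hw x).2 h) (ne_of_gt hx0)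
      · exact h
    have hflip := rr_flip w hw hle
    constructor
    · exact (mem_D w).2 (by simp only; omega)
    · rw [hflip]; linarith
  · intro x hx
    simp only [Finset.mem_filter] at hx ⊢
    obtain ⟨hxD, hx1⟩ := hx
    have hle : x.2 ≤ w x.1 := le_of_lt ((mem_D w).1 hxD)
    have hx2 : 0 < x.2 := by
      rcases Nat.eq_zero_or_pos x.2 with h | h
      · have := (rr_eq_zero_iff w hw x).2 h
        rw [this] at hx1; linarith
      · exact h
    have hflip := rr_flip w hw hle
    have hlt1 : rr w x < 1 := rr_lt_one w hw hxD
    refine ⟨(mem_D w).2 (by simp only; omega), ?_, ?_⟩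
    · rw [hflip]; linarith
    · rw [hflip]; linarith
  · intro x hx
    simp only [Finset.mem_filter] at hx
    have hle : x.2 ≤ w x.1 := le_of_lt ((mem_D w).1 hx.1)
    have : w x.1 - (w x.1 - x.2) = x.2 := by omega
    simp only [this]
  · intro x hx
    simp only [Finset.mem_filter] at hx
    have hle : x.2 ≤ w x.1 := le_of_lt ((mem_D w).1 hx.1)
    have : w x.1 - (w x.1 - x.2) = x.2 := by omega
    simp only [this]

lemma card_lt_one_sub {r : ℚ} (h0 : 0 < r) (h1 : r < 1) :
    ((D w).filter (fun x => rr w x < 1 - r)).card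
      = (n + 1) + ((D w).filter (fun x => r < rr w x)).card := by
  have hsplit : (D w).filter (fun x => rr w x < 1 - r)
      = (D w).filter (fun x => rr w x = 0)
        ∪ (D w).filter (fun x => 0 < rr w x ∧ rr w x < 1 - r) := by
    rw [← Finset.filter_or]
    refine Finset.filter_congr (fun x _ => ?_)
    constructor
    · intro hx
      rcases eq_or_lt_of_le (rr_nonneg w x) with h | h
      · exact Or.inl h.symm
      · exact Or.inr ⟨h, hx⟩
    · rintro (hx | hx)
      · rw [hx]; linarith
      · exact hx.2
  rw [hsplit, Finset.card_union_of_disjoint, card_class' w hw, S_zero w hw,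
    Finset.card_univ, Fintype.card_fin, flip_card w hw h0 h1]
  rw [Finset.disjoint_left]
  intro x hx hx'
  simp only [Finset.mem_filter] at hx hx'
  exact absurd hx.2 (ne_of_gt hx'.2.1)

lemma dual_zero {p : Fin (n + 1) × ℕ} (hp : p ∈ D w) (h0 : rr w p = 0) :
    pos w p ≤ n ∧ ∃ q ∈ D w, rr w q = 0 ∧ pos w p + pos w q = n := by
  have hempty : (D w).filter (fun x => rr w x < rr w p) = ∅ := by
    rw [h0]
    exact Finset.filter_false_of_mem (fun x _ => not_lt.2 (rr_nonneg w x))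
  have hpos : pos w p = srk w 0 p.1 := by
    rw [pos_split w hw, hempty, h0]; simp
  have hcardS : (S w (0 : ℚ)).card = n + 1 := by
    rw [S_zero w hw, Finset.card_univ, Fintype.card_fin]
  have hle : srk w 0 p.1 ≤ n := srk_le_n w p.1
  obtain ⟨j, hjS, hjrk⟩ := srk_surj w (r := 0) (k := n - srk w 0 p.1)
    (by rw [hcardS]; omega)
  refine ⟨by omega, (j, 0), (mem_D w).2 (hw j), (rr_eq_zero_iff w hw _).2 rfl, ?_⟩
  have hq0 : rr w ((j, 0) : Fin (n + 1) × ℕ) = 0 := (rr_eq_zero_iff w hw _).2 rfl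
  have hqpos : pos w (j, 0) = srk w 0 j := by
    rw [pos_split w hw, hq0]
    rw [show (D w).filter (fun x => rr w x < 0) = ∅ from
      Finset.filter_false_of_mem (fun x _ => not_lt.2 (rr_nonneg w x))]
    simp
  rw [hpos, hqpos, hjrk]
  omega

lemma dual_pos {p : Fin (n + 1) × ℕ} (hp : p ∈ D w) (h0 : rr w p ≠ 0) :
    ∃ q ∈ D w, rr w q = 1 - rr w p ∧ pos w p + pos w q = (D w).card + n := by
  set r := rr w p with hr
  have hr0 : 0 < r := lt_of_le_of_ne (rr_nonneg w p) (Ne.symm h0)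
  have hr1 : r < 1 := rr_lt_one w hw hp
  have hp1S : p.1 ∈ S w r := by
    simp only [S, Finset.mem_filter, Finset.mem_univ, true_and, Finset.mem_range]
    exact ⟨p.2, (mem_D w).1 hp, rfl⟩
  have hsrk := srk_lt w hp1S
  obtain ⟨j, hjS, hjrk⟩ := srk_surj w (r := r)
    (k := (S w r).card - 1 - srk w r p.1) (by omega)
  simp only [S, Finset.mem_filter, Finset.mem_univ, true_and, Finset.mem_range] at hjS
  obtain ⟨m, hm, hmr⟩ := hjS
  have hm0 : 0 < m := by
    rcases Nat.eq_zero_or_pos m with rfl | h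
    · simp only [Nat.cast_zero, zero_div] at hmr
      exact absurd hmr.symm (ne_of_gt hr0)
    · exact h
  refine ⟨(j, w j - m), (mem_D w).2 (by simp only; omega), ?_, ?_⟩
  · have := rr_flip w hw (x := (j, m)) (le_of_lt hm)
    simp only at this
    rw [this]
    rw [show rr w ((j, m) : Fin (n + 1) × ℕ) = r from hmr]
  · have hrrq : rr w ((j, w j - m) : Fin (n + 1) × ℕ) = 1 - r := by
      have := rr_flip w hw (x := (j, m)) (le_of_lt hm)
      simp only at this
      rw [this, show rr w ((j, m) : Fin (n + 1) × ℕ) = r from hmr]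
    have hq : pos w ((j, w j - m) : Fin (n + 1) × ℕ)
        = ((D w).filter (fun x => rr w x < 1 - r)).card + srk w r j := by
      rw [pos_split w hw, hrrq]
      congr 1
      rw [srk, srk, S_dual w hw hr0 hr1]
    have hjS' : j ∈ S w r := by
      simp only [S, Finset.mem_filter, Finset.mem_univ, true_and, Finset.mem_range]
      exact ⟨m, hm, hmr⟩
    have h5 := card_lt_one_sub w hw hr0 hr1
    have htri := tri_card w hw r
    have hppos := pos_split w hw (p := p)
    rw [← hr] at hppos
    omega

variable (a : ℕ → Fin (n + 1) → ℕ) (i : ℕ → Fin (n + 1))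
variable (hmin : ∀ k j, (a k (i k) : ℚ) / (w (i k) : ℚ) ≤ (a k j : ℚ) / (w j : ℚ))
variable (hleast : ∀ k j,
      (a k j : ℚ) / (w j : ℚ) = (a k (i k) : ℚ) / (w (i k) : ℚ) → i k ≤ j)
variable (hstep : ∀ k, a (k + 1) = a k + Pi.single (i k) 1)
include hmin hleast hstep

lemma greedy_step (k : ℕ) (hk : k < (D w).card)
    (inv1 : ∀ j, a k j ≤ w j)
    (inv2 : ∀ j m, m < w j → (pos w (j, m) < k ↔ m < a k j)) :
    (a k (i k) < w (i k) ∧ pos w (i k, a k (i k)) = k)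
      ∧ ((∀ j, a (k + 1) j ≤ w j)
        ∧ (∀ j m, m < w j → (pos w (j, m) < k + 1 ↔ m < a (k + 1) j))) := by
  obtain ⟨p, hpD, hppos⟩ := pos_surj w hw hk
  have hpw : p.2 < w p.1 := (mem_D w).1 hpD
  have hpe : ((p.1, p.2) : Fin (n + 1) × ℕ) = p := rfl
  have h1 : ¬ (p.2 < a k p.1) := by
    intro h
    have := (inv2 p.1 p.2 hpw).2 h
    rw [hpe, hppos] at this
    omega
  have h2 : ¬ (a k p.1 < p.2) := by
    intro h
    have hmlt : a k p.1 < w p.1 := h.trans hpw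
    have hplt : plt w (p.1, a k p.1) p := by
      left
      show (a k p.1 : ℚ) / (w p.1 : ℚ) < (p.2 : ℚ) / (w p.1 : ℚ)
      have hc := wpos w hw p.1
      have hab : (a k p.1 : ℚ) < (p.2 : ℚ) := by exact_mod_cast h
      rw [div_lt_div_iff₀ hc hc]
      exact mul_lt_mul_of_pos_right hab hc
    have hlt := (pos_lt_iff w hw ((mem_D w).2 hmlt) hpD).2 hplt
    rw [hppos] at hlt
    have := (inv2 p.1 (a k p.1) hmlt).1 hlt
    omega
  have haeq : a k p.1 = p.2 := by omega
  have hrp : rr w p = (a k p.1 : ℚ) / (w p.1 : ℚ) := by rw [haeq]; rfl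
  have key_a : ∀ j, rr w p ≤ (a k j : ℚ) / (w j : ℚ) := by
    intro j
    rcases lt_or_ge (a k j) (w j) with hj | hj
    · have hqD : ((j, a k j) : Fin (n + 1) × ℕ) ∈ D w := (mem_D w).2 hj
      have hnot : ¬ pos w (j, a k j) < k := by
        intro hcon
        have := (inv2 j (a k j) hj).1 hcon
        omega
      have hnplt : ¬ plt w (j, a k j) p := by
        intro hcon
        have := (pos_lt_iff w hw hqD hpD).2 hcon
        omega
      have := (not_or.1 hnplt).1
      exact le_of_not_gt this
    · have h1' : (1 : ℚ) ≤ (a k j : ℚ) / (w j : ℚ) :=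
        (one_le_div (wpos w hw j)).2 (by exact_mod_cast hj)
      linarith [rr_lt_one w hw hpD]
  have key_b : ∀ j, j < p.1 → rr w p < (a k j : ℚ) / (w j : ℚ) := by
    intro j hjp
    rcases lt_or_ge (a k j) (w j) with hj | hj
    · have hqD : ((j, a k j) : Fin (n + 1) × ℕ) ∈ D w := (mem_D w).2 hj
      have hnot : ¬ pos w (j, a k j) < k := by
        intro hcon
        have := (inv2 j (a k j) hj).1 hcon
        omega
      have hnplt : ¬ plt w (j, a k j) p := by
        intro hcon
        have := (pos_lt_iff w hw hqD hpD).2 hcon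
        omega
      have hno := not_or.1 hnplt
      have hne : rr w ((j, a k j) : Fin (n + 1) × ℕ) ≠ rr w p := by
        intro hcon
        exact hno.2 ⟨hcon, hjp⟩
      have := le_of_not_gt hno.1
      exact lt_of_le_of_ne this (Ne.symm hne)
    · have h1' : (1 : ℚ) ≤ (a k j : ℚ) / (w j : ℚ) :=
        (one_le_div (wpos w hw j)).2 (by exact_mod_cast hj)
      linarith [rr_lt_one w hw hpD]
  have hceq : (a k (i k) : ℚ) / (w (i k) : ℚ) = rr w p :=
    le_antisymm (hrp ▸ hmin k p.1) (key_a (i k))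
  have hile : i k ≤ p.1 := hleast k p.1 (by rw [← hrp]; exact hceq.symm)
  have hige : ¬ i k < p.1 := by
    intro hcon
    have := key_b (i k) hcon
    rw [hceq] at this
    exact lt_irrefl _ this
  have hieq : i k = p.1 := le_antisymm hile (not_lt.1 hige)
  have hpair : ((i k, a k (i k)) : Fin (n + 1) × ℕ) = p := by
    rw [hieq, haeq]
  have hkey1 : a k (i k) < w (i k) := by rw [hieq, haeq]; exact hpw
  have hkey2 : pos w (i k, a k (i k)) = k := by rw [hpair, hppos]
  have hval : ∀ j, a (k + 1) j = if j = i k then a k j + 1 else a k j := by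
    intro j
    rw [hstep k]
    simp only [Pi.add_apply, Pi.single_apply]
    split <;> omega
  refine ⟨⟨hkey1, hkey2⟩, fun j => ?_, fun j m hm => ?_⟩
  · rw [hval j]
    split
    · next h => subst h; omega
    · exact inv1 j
  · rw [hval j]
    constructor
    · intro hlt
      rcases Nat.lt_succ_iff_lt_or_eq.1 hlt with hlt' | heq
      · have := (inv2 j m hm).1 hlt'
        split <;> omega
      · have hqD : ((j, m) : Fin (n + 1) × ℕ) ∈ D w := (mem_D w).2 hm
        have : ((j, m) : Fin (n + 1) × ℕ) = p :=
          pos_inj w hw hqD hpD (by rw [heq, hppos])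
        have hj1 : j = p.1 := congrArg Prod.fst this
        have hm2 : m = p.2 := congrArg Prod.snd this
        subst hj1
        subst hm2
        rw [if_pos hieq.symm]
        omega
    · intro hlt
      by_cases hji : j = i k
      · rw [if_pos hji] at hlt
        rcases Nat.lt_succ_iff_lt_or_eq.1 hlt with hlt' | heq
        · exact Nat.lt_succ_of_lt ((inv2 j m hm).2 hlt')
        · have hthis : ((j, m) : Fin (n + 1) × ℕ) = p := by
            rw [← hpair]
            simp [Prod.ext_iff, hji, heq]
          rw [hthis, hppos]
          omega
      · rw [if_neg hji] at hlt
        exact Nat.lt_succ_of_lt ((inv2 j m hm).2 hlt)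

lemma greedy_inv : ∀ k, k ≤ (D w).card → (a 0 = 0) →
    (∀ j, a k j ≤ w j) ∧ (∀ j m, m < w j → (pos w (j, m) < k ↔ m < a k j)) := by
  intro k
  induction k with
  | zero =>
    intro _ ha0
    refine ⟨fun j => by rw [ha0]; simp, fun j m hm => ?_⟩
    rw [ha0]
    simp
  | succ k ih =>
    intro hk ha0
    have hk' : k < (D w).card := by omega
    have inv := ih (le_of_lt hk') ha0
    exact (greedy_step w hw a i hmin hleast hstep k hk' inv.1 inv.2).2

lemma greedy_key (ha0 : a 0 = 0) : ∀ k, k < (D w).card →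
    a k (i k) < w (i k) ∧ pos w (i k, a k (i k)) = k := by
  intro k hk
  have inv := greedy_inv w hw a i hmin hleast hstep k (le_of_lt hk) ha0
  exact (greedy_step w hw a i hmin hleast hstep k hk inv.1 inv.2).1

end Test






/-- Symmetry of the spectrum at infinity (eq. RangeAlpha) for the mirror of
`ℙ(1, w₁, …, wₙ)`: the multiset `{α_k = k - μ·c_k : 0 ≤ k ≤ μ-1}` is
symmetric about `n/2`, i.e. it equals the multiset `{n - α_k}`. -/
theorem spectrum_symmetry {n : ℕ} (hn : 1 ≤ n)
    (w : Fin (n + 1) → ℕ) (hw0 : w 0 = 1) (hw : ∀ j, 0 < w j)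
    (a : ℕ → Fin (n + 1) → ℕ) (i : ℕ → Fin (n + 1))
    (ha0 : a 0 = 0)
    (hmin : ∀ k j, (a k (i k) : ℚ) / (w (i k) : ℚ) ≤ (a k j : ℚ) / (w j : ℚ))
    (hleast : ∀ k j,
      (a k j : ℚ) / (w j : ℚ) = (a k (i k) : ℚ) / (w (i k) : ℚ) → i k ≤ j)
    (hstep : ∀ k, a (k + 1) = a k + Pi.single (i k) 1)
    (c : ℕ → ℚ) (hc : ∀ k, c k = (a k (i k) : ℚ) / (w (i k) : ℚ))
    (μ : ℕ) (hμ : μ = ∑ j, w j)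
    (α : ℕ → ℚ) (hα : ∀ k, α k = (k : ℚ) - (μ : ℚ) * c k) :
    (Multiset.range μ).map α = (Multiset.range μ).map (fun k => (n : ℚ) - α k) := by
  classical
  have hcard : (Test.D w).card = μ := by rw [Test.card_D, hμ]
  have hkey := Test.greedy_key w hw a i hmin hleast hstep ha0
  set σ : ℕ → ℕ := fun k => if c k = 0 then n - k else μ + n - k with hσ
  have main : ∀ k, k < μ → σ k < μ ∧ (c k = 0 → k ≤ n) ∧ α (σ k) = (n : ℚ) - α k := by
    intro k hk
    have hkD : k < (Test.D w).card := by omega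
    obtain ⟨hlt, hpos⟩ := hkey k hkD
    have hpD : ((i k, a k (i k)) : Fin (n + 1) × ℕ) ∈ Test.D w := (Test.mem_D w).2 hlt
    have hcrrk : c k = Test.rr w (i k, a k (i k)) := by rw [hc]; rfl
    by_cases h0 : c k = 0
    · have hrr0 : Test.rr w (i k, a k (i k)) = 0 := by rw [← hcrrk]; exact h0
      obtain ⟨hlen, q, hqD, hq0, hsum⟩ := Test.dual_zero w hw hpD hrr0
      rw [hpos] at hlen hsum
      have hσk : σ k = n - k := by rw [hσ]; simp [h0]
      have hposq : Test.pos w q = σ k := by omega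
      have hσlt : σ k < μ := by
        have := Test.pos_lt_card w hw hqD
        omega
      obtain ⟨hlt', hpos'⟩ := hkey (σ k) (by omega)
      have hq'D : ((i (σ k), a (σ k) (i (σ k))) : Fin (n + 1) × ℕ) ∈ Test.D w :=
        (Test.mem_D w).2 hlt'
      have heqq : ((i (σ k), a (σ k) (i (σ k))) : Fin (n + 1) × ℕ) = q :=
        Test.pos_inj w hw hq'D hqD (by rw [hpos', hposq])
      have hcσ : c (σ k) = 0 := by
        have h1 : c (σ k) = Test.rr w q := by rw [hc, ← heqq]; rfl
        rw [h1, hq0]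
      refine ⟨hσlt, fun _ => hlen, ?_⟩
      simp only [hα]
      rw [hcσ, h0, hσk, Nat.cast_sub hlen]
      ring
    · have hrr0 : Test.rr w (i k, a k (i k)) ≠ 0 := by rw [← hcrrk]; exact h0
      obtain ⟨q, hqD, hq1, hsum⟩ := Test.dual_pos w hw hpD hrr0
      rw [hpos, hcard] at hsum
      have hσk : σ k = μ + n - k := by rw [hσ]; simp [h0]
      have hposq : Test.pos w q = σ k := by omega
      have hσlt : σ k < μ := by
        have := Test.pos_lt_card w hw hqD
        omega
      obtain ⟨hlt', hpos'⟩ := hkey (σ k) (by omega)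
      have hq'D : ((i (σ k), a (σ k) (i (σ k))) : Fin (n + 1) × ℕ) ∈ Test.D w :=
        (Test.mem_D w).2 hlt'
      have heqq : ((i (σ k), a (σ k) (i (σ k))) : Fin (n + 1) × ℕ) = q :=
        Test.pos_inj w hw hq'D hqD (by rw [hpos', hposq])
      have hcσ : c (σ k) = 1 - c k := by
        have h1 : c (σ k) = Test.rr w q := by rw [hc, ← heqq]; rfl
        rw [h1, hq1, ← hcrrk]
      refine ⟨hσlt, fun h => absurd h h0, ?_⟩
      simp only [hα]
      rw [hcσ, hσk, Nat.cast_sub (by omega : k ≤ μ + n)]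
      push_cast
      ring
  have hinj : Set.InjOn σ ↑(Finset.range μ) := by
    intro x hx y hy hxy
    simp only [Finset.coe_range, Set.mem_Iio] at hx hy
    have hxm := main x hx
    have hym := main y hy
    by_cases hcx : c x = 0 <;> by_cases hcy : c y = 0
    · have e1 : σ x = n - x := by rw [hσ]; simp [hcx]
      have e2 : σ y = n - y := by rw [hσ]; simp [hcy]
      rw [e1, e2] at hxy
      have := hxm.2.1 hcx
      have := hym.2.1 hcy
      omega
    · have e1 : σ x = n - x := by rw [hσ]; simp [hcx]
      have e2 : σ y = μ + n - y := by rw [hσ]; simp [hcy]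
      rw [e1, e2] at hxy
      have := hxm.2.1 hcx
      omega
    · have e1 : σ x = μ + n - x := by rw [hσ]; simp [hcx]
      have e2 : σ y = n - y := by rw [hσ]; simp [hcy]
      rw [e1, e2] at hxy
      have := hym.2.1 hcy
      omega
    · have e1 : σ x = μ + n - x := by rw [hσ]; simp [hcx]
      have e2 : σ y = μ + n - y := by rw [hσ]; simp [hcy]
      rw [e1, e2] at hxy
      omega
  have himg : (Finset.range μ).image σ = Finset.range μ := by
    apply Finset.eq_of_subset_of_card_le
    · intro y hy
      obtain ⟨x, hx, rfl⟩ := Finset.mem_image.1 hy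
      exact Finset.mem_range.2 (main x (Finset.mem_range.1 hx)).1
    · rw [Finset.card_image_of_injOn hinj]
  have hval : (Multiset.range μ).map σ = Multiset.range μ := by
    have h1 : ((Finset.range μ).image σ).val = (Finset.range μ).val.map σ :=
      Finset.image_val_of_injOn hinj
    rw [← Finset.range_val, ← h1, himg]
  calc (Multiset.range μ).map α = ((Multiset.range μ).map σ).map α := by rw [hval]
    _ = (Multiset.range μ).map (fun k => α (σ k)) := by rw [Multiset.map_map]; rfl
    _ = (Multiset.range μ).map (fun k => (n : ℚ) - α k) :=
      Multiset.map_congr rfl (fun x hx => (main x (Multiset.mem_range.1 hx)).2.2)
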